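/- If a vector of weights (C_m)_{m=-2}^{2} satisfies ∑_m C_m = 0, ∑_m m C_m = -c, ∑_m m² C_m = c²/2^{k}, and ∑_m m³ C_m = -c³/4^{k} for some integer k ≥ 0, and C' = P·C where P is the γ=1 recurrence matrix, then C' satisfies the same four identities with k replaced by k+1. -/

import Mathlib

/-- One step of the γ = 1 recurrence preserves the four moment identities,
incrementing the parameter `k` by one. -/
theorem gamma_one_recurrence_step (c : ℤ) (k : ℕ) (C : Fin 5 → ℝ)
    (h0 : ∑ i : Fin 5, C i = 0)
    (h1 : ∑ i : Fin 5, (((i : ℕ) : ℝ) - 2) * C i = -(c : ℝ))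
    (h2 : ∑ i : Fin 5, (((i : ℕ) : ℝ) - 2) ^ 2 * C i = (c : ℝ) ^ 2 / 2 ^ k)
    (h3 : ∑ i : Fin 5, (((i : ℕ) : ℝ) - 2) ^ 3 * C i = -((c : ℝ) ^ 3) / 4 ^ k) :
    let P : Matrix (Fin 5) (Fin 5) ℝ :=
      !![0, -1/8, 0, 0, 0;
         2, 9/8, 0, -1/8, 0;
         0, 9/8, 2, 9/8, 0;
         0, -1/8, 0, 9/8, 2;
         0, 0, 0, -1/8, 0]
    let C' : Fin 5 → ℝ := P.mulVec C
    (∑ i : Fin 5, C' i = 0) ∧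
    (∑ i : Fin 5, (((i : ℕ) : ℝ) - 2) * C' i = -(c : ℝ)) ∧
    (∑ i : Fin 5, (((i : ℕ) : ℝ) - 2) ^ 2 * C' i = (c : ℝ) ^ 2 / 2 ^ (k + 1)) ∧
    (∑ i : Fin 5, (((i : ℕ) : ℝ) - 2) ^ 3 * C' i = -((c : ℝ) ^ 3) / 4 ^ (k + 1)) := by
  intro P C'
  simp only [Fin.sum_univ_five] at h0 h1 h2 h3 ⊢
  have e0 : (((0:Fin 5):ℕ):ℝ) = 0 := by norm_cast
  have e1 : (((1:Fin 5):ℕ):ℝ) = 1 := by norm_cast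
  have e2 : (((2:Fin 5):ℕ):ℝ) = 2 := by norm_cast
  have e3 : (((3:Fin 5):ℕ):ℝ) = 3 := by norm_cast
  have e4 : (((4:Fin 5):ℕ):ℝ) = 4 := by norm_cast
  rw [e0, e1, e2, e3, e4] at h1 h2 h3
  norm_num [C', P, Matrix.mulVec, dotProduct, Fin.sum_univ_five, pow_succ, e0, e1, e2, e3, e4, Matrix.cons_val_two, Matrix.cons_val_three, Matrix.cons_val_four]
  refine ⟨?_, ?_, ?_, ?_⟩
  · linear_combination 2 * h0
  · linear_combination h1
  · linear_combination h2 / 2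
  · linear_combination h3 / 4
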